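/- Let {x_k} be the RK iterates for the (possibly inconsistent) system Ãx ≈ b̃ with arbitrary initial point x_0 ∈ ℝⁿ. Then for every reference point x_* ∈ ℝⁿ and every k ≥ 0, 𝔼‖x_k − x_0ⁿ − x_*ʳ‖² ≤ (1 − 1/R̃)^k ‖x_0ʳ − x_*ʳ‖² + ‖Ã x_* − b̃‖²/σ̃_min². -/

import Mathlib

open Matrix

noncomputable section

namespace RK

/-- The Euclidean inner product on `Fin n → ℝ`. -/
def dot {n : ℕ} (v w : Fin n → ℝ) : ℝ := ∑ i, v i * w i

/-- The squared Euclidean norm on `Fin n → ℝ`. -/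
def normSq {n : ℕ} (v : Fin n → ℝ) : ℝ := ∑ i, v i ^ 2

/-- The Euclidean norm on `Fin n → ℝ`. -/
def euclNorm {n : ℕ} (v : Fin n → ℝ) : ℝ := Real.sqrt (normSq v)

/-- The squared Frobenius norm of a matrix. -/
def frobSq {m n : ℕ} (A : Matrix (Fin m) (Fin n) ℝ) : ℝ := ∑ i, ∑ j, A i j ^ 2

/-- One step of the (randomized) Kaczmarz method for the system `A x ≈ b`, using row `i`:
`x ↦ x - ((aᵢᵀ x - bᵢ) / ‖aᵢ‖²) aᵢ`. -/
def rkStep {m n : ℕ} (A : Matrix (Fin m) (Fin n) ℝ) (b : Fin m → ℝ) (i : Fin m)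
    (x : Fin n → ℝ) : Fin n → ℝ :=
  x - ((dot (A i) x - b i) / normSq (A i)) • A i

/-- `rkExp A b x0 k f` is the expectation `𝔼 f(x_k)` of `f` evaluated at the `k`-th iterate of the
randomized Kaczmarz algorithm applied to `A x ≈ b` started at `x0`, where at each step the row
index `i` is drawn independently at random with probability `‖aᵢ‖² / ‖A‖_F²`. -/
def rkExp {m n : ℕ} (A : Matrix (Fin m) (Fin n) ℝ) (b : Fin m → ℝ) (x0 : Fin n → ℝ) :
    ℕ → ((Fin n → ℝ) → ℝ) → ℝ
  | 0, f => f x0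
  | k + 1, f => rkExp A b x0 k fun x => ∑ i, normSq (A i) / frobSq A * f (rkStep A b i x)

/-- The four Penrose conditions: `B` is the Moore–Penrose pseudoinverse of `A`. -/
def IsMoorePenrose {m n : ℕ} (A : Matrix (Fin m) (Fin n) ℝ)
    (B : Matrix (Fin n) (Fin m) ℝ) : Prop :=
  A * B * A = A ∧ B * A * B = B ∧ (A * B)ᵀ = A * B ∧ (B * A)ᵀ = B * A

/-- The row space `range(Aᵀ)` of a matrix `A`. -/
def rowSpace {m n : ℕ} (A : Matrix (Fin m) (Fin n) ℝ) : Set (Fin n → ℝ) :=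
  {v | ∃ u : Fin m → ℝ, v = Aᵀ.mulVec u}

/-- The null space (kernel) of a matrix `A`. -/
def nullSpace {m n : ℕ} (A : Matrix (Fin m) (Fin n) ℝ) : Set (Fin n → ℝ) :=
  {v | A.mulVec v = 0}

/-- `σ` is the smallest nonzero singular value of `A`: `σ > 0`, `σ²` is an eigenvalue of `AᵀA`,
and `σ²` is less than or equal to every nonzero eigenvalue of `AᵀA`. -/
def IsSmallestNonzeroSingularValue {m n : ℕ} (A : Matrix (Fin m) (Fin n) ℝ) (σ : ℝ) : Prop :=
  0 < σ ∧ (∃ v : Fin n → ℝ, v ≠ 0 ∧ (Aᵀ * A).mulVec v = σ ^ 2 • v) ∧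
    ∀ μ : ℝ, μ ≠ 0 → (∃ v : Fin n → ℝ, v ≠ 0 ∧ (Aᵀ * A).mulVec v = μ • v) → σ ^ 2 ≤ μ

/-! ### Auxiliary lemmas -/

variable {m n : ℕ}

lemma normSq_nonneg (v : Fin n → ℝ) : 0 ≤ normSq v :=
  Finset.sum_nonneg fun _ _ => sq_nonneg _

lemma normSq_eq_zero {v : Fin n → ℝ} (h : normSq v = 0) : v = 0 := by
  funext i
  have := (Finset.sum_eq_zero_iff_of_nonneg (fun i _ => sq_nonneg (v i))).1 h i (Finset.mem_univ i)
  simpa [pow_eq_zero_iff] using this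

lemma normSq_pos {v : Fin n → ℝ} (h : v ≠ 0) : 0 < normSq v :=
  lt_of_le_of_ne (normSq_nonneg v) fun h' => h (normSq_eq_zero h'.symm)

lemma dot_self (v : Fin n → ℝ) : dot v v = normSq v := by
  simp [dot, normSq, sq]

lemma dot_comm (v w : Fin n → ℝ) : dot v w = dot w v := by
  simp [dot, mul_comm]

lemma dot_smul_left (c : ℝ) (v w : Fin n → ℝ) : dot (c • v) w = c * dot v w := by
  simp [dot, Finset.mul_sum, mul_assoc]

lemma dot_smul_right (c : ℝ) (v w : Fin n → ℝ) : dot v (c • w) = c * dot v w := by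
  simp only [dot, Finset.mul_sum, Pi.smul_apply, smul_eq_mul]
  apply Finset.sum_congr rfl; intros; ring

lemma dot_sub_right (u v w : Fin n → ℝ) : dot u (v - w) = dot u v - dot u w := by
  simp [dot, mul_sub, Finset.sum_sub_distrib]

lemma dot_add_right (u v w : Fin n → ℝ) : dot u (v + w) = dot u v + dot u w := by
  simp [dot, mul_add, Finset.sum_add_distrib]

lemma dot_sum_left {ι : Type*} (s : Finset ι) (f : ι → (Fin n → ℝ)) (w : Fin n → ℝ) :
    dot (∑ j ∈ s, f j) w = ∑ j ∈ s, dot (f j) w := by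
  simp [dot, Finset.sum_apply, Finset.sum_mul]
  exact Finset.sum_comm

lemma dot_sum_right {ι : Type*} (s : Finset ι) (f : ι → (Fin n → ℝ)) (w : Fin n → ℝ) :
    dot w (∑ j ∈ s, f j) = ∑ j ∈ s, dot w (f j) := by
  rw [dot_comm, dot_sum_left]
  simp [dot_comm]

lemma mulVec_apply (A : Matrix (Fin m) (Fin n) ℝ) (v : Fin n → ℝ) (i : Fin m) :
    A.mulVec v i = dot (A i) v := rfl

lemma dot_mulVec (A : Matrix (Fin m) (Fin n) ℝ) (w : Fin n → ℝ) (u : Fin m → ℝ) :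
    dot (A.mulVec w) u = dot w (Aᵀ.mulVec u) := by
  simp only [dot, Matrix.mulVec, dotProduct, Matrix.transpose_apply,
    Finset.sum_mul, Finset.mul_sum]
  rw [Finset.sum_comm]
  apply Finset.sum_congr rfl; intro i _; apply Finset.sum_congr rfl; intro j _; ring

lemma normSq_mulVec (A : Matrix (Fin m) (Fin n) ℝ) (v : Fin n → ℝ) :
    normSq (A.mulVec v) = dot v ((Aᵀ * A).mulVec v) := by
  rw [← dot_self, dot_mulVec, Matrix.mulVec_mulVec]

lemma normSq_sub_smul (v a : Fin n → ℝ) (t : ℝ) :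
    normSq (v - t • a) = normSq v - 2 * t * dot a v + t ^ 2 * normSq a := by
  have h : ∀ i, (v i - t * a i) ^ 2 = v i ^ 2 - 2 * t * (a i * v i) + t ^ 2 * a i ^ 2 := by
    intro i; ring
  simp only [normSq, dot, Pi.sub_apply, Pi.smul_apply, smul_eq_mul, h,
    Finset.sum_add_distrib, Finset.sum_sub_distrib, ← Finset.mul_sum]

lemma mulVec_sumFun {ι : Type*} (A : Matrix (Fin m) (Fin n) ℝ) (s : Finset ι)
    (f : ι → (Fin n → ℝ)) : A.mulVec (∑ j ∈ s, f j) = ∑ j ∈ s, A.mulVec (f j) := by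
  funext i
  simp [Matrix.mulVec, dotProduct, Finset.sum_apply, Finset.mul_sum]
  exact Finset.sum_comm

lemma frobSq_eq (A : Matrix (Fin m) (Fin n) ℝ) : frobSq A = ∑ i, normSq (A i) := rfl

/-- Key spectral estimate: for `v` in the row space, `σ² ‖v‖² ≤ ‖Av‖²`. -/
lemma spectral_bound (A : Matrix (Fin m) (Fin n) ℝ) {σ : ℝ}
    (hσ : IsSmallestNonzeroSingularValue A σ) {v : Fin n → ℝ} (hv : v ∈ rowSpace A) :
    σ ^ 2 * normSq v ≤ normSq (A.mulVec v) := by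
  obtain ⟨u, rfl⟩ := hv
  set v := Aᵀ.mulVec u with hvdef
  have hH : (Aᵀ * A).IsHermitian := by
    simpa [Matrix.conjTranspose_eq_transpose_of_trivial] using Matrix.isHermitian_conjTranspose_mul_self A
  set b := hH.eigenvectorBasis with hb
  set μ := hH.eigenvalues with hμ
  set c : Fin n → ℝ := fun j => dot (⇑(b j)) v with hc
  have hinner : ∀ j, (inner ℝ (b j) (WithLp.toLp 2 v) : ℝ) = c j := by
    intro j; rw [PiLp.inner_apply]; simp [hc, dot, mul_comm]
  have hrep : (∑ j, c j • ⇑(b j) : Fin n → ℝ) = v := by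
    simp_rw [← hinner]
    have := congrArg WithLp.ofLp (b.sum_repr' (WithLp.toLp 2 v))
    simpa using this
  have horth : ∀ j k, dot ⇑(b j) ⇑(b k) = if j = k then 1 else 0 := by
    intro j k
    have h := orthonormal_iff_ite.1 b.orthonormal j k
    rw [PiLp.inner_apply] at h
    simpa [dot, mul_comm] using h
  have heig : ∀ j, (Aᵀ * A).mulVec ⇑(b j) = μ j • ⇑(b j) := hH.mulVec_eigenvectorBasis
  have hbne : ∀ j, (⇑(b j) : Fin n → ℝ) ≠ 0 := by
    intro j h0
    have h1 := horth j j
    rw [if_pos rfl, h0] at h1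
    simp [dot] at h1
  have hc0 : ∀ j, μ j = 0 → c j = 0 := by
    intro j h0
    have hAb : A.mulVec ⇑(b j) = 0 := by
      apply normSq_eq_zero
      rw [normSq_mulVec, heig j, h0, zero_smul]
      simp [dot]
    have : c j = dot (A.mulVec ⇑(b j)) u := by
      rw [hc, hvdef, dot_mulVec]
    rw [this, hAb]
    simp [dot]
  have hple : ∀ j, σ ^ 2 * c j ^ 2 ≤ μ j * c j ^ 2 := by
    intro j
    by_cases h0 : μ j = 0
    · rw [hc0 j h0, h0]; simp
    · exact mul_le_mul_of_nonneg_right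
        (hσ.2.2 (μ j) h0 ⟨⇑(b j), hbne j, heig j⟩) (sq_nonneg _)
  have hnv : normSq v = ∑ j, c j ^ 2 := by
    calc normSq v = dot v v := (dot_self v).symm
      _ = dot (∑ j, c j • ⇑(b j)) v := by rw [hrep]
      _ = ∑ j, c j * dot ⇑(b j) v := by rw [dot_sum_left]; simp [dot_smul_left]
      _ = ∑ j, c j ^ 2 := by apply Finset.sum_congr rfl; intro j _; rw [sq]
  have hAv : normSq (A.mulVec v) = ∑ j, μ j * c j ^ 2 := by
    rw [normSq_mulVec]
    conv_lhs => rw [← hrep]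
    rw [mulVec_sumFun, dot_sum_left]
    simp_rw [Matrix.mulVec_smul, heig, smul_smul, dot_smul_left, dot_sum_right,
      dot_smul_right, horth, mul_ite, mul_one, mul_zero, Finset.sum_ite_eq, Finset.mem_univ,
      if_true]
    apply Finset.sum_congr rfl; intro j _; ring
  rw [hnv, hAv, Finset.mul_sum]
  exact Finset.sum_le_sum fun j _ => hple j

lemma sigma_le_frob (A : Matrix (Fin m) (Fin n) ℝ) {σ : ℝ}
    (hσ : IsSmallestNonzeroSingularValue A σ) : σ ^ 2 ≤ frobSq A := by
  obtain ⟨w, hw0, hwe⟩ := hσ.2.1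
  have hw : 0 < normSq w := normSq_pos hw0
  have h1 : σ ^ 2 * normSq w = normSq (A.mulVec w) := by
    rw [normSq_mulVec, hwe, dot_smul_right, dot_self]
  have h2 : normSq (A.mulVec w) ≤ frobSq A * normSq w := by
    have he : normSq (A.mulVec w) = ∑ i, dot (A i) w ^ 2 := by
      simp [normSq, mulVec_apply]
    rw [he, frobSq_eq, Finset.sum_mul]
    apply Finset.sum_le_sum; intro i _
    have := Finset.sum_mul_sq_le_sq_mul_sq Finset.univ (A i) w
    simpa [dot, normSq] using this
  nlinarith

/-- **Theorem 2.2 (arbitrary reference point).** For the RK iterates of the possibly inconsistent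
system `Ãx ≈ b̃` with arbitrary initial point `x₀`, and any reference point `x⋆`,
`𝔼‖x_k − x₀ⁿ − x⋆ʳ‖² ≤ (1 − 1/R̃)^k ‖x₀ʳ − x⋆ʳ‖² + ‖Ã x⋆ − b̃‖² / σ̃_min²`,
where `R̃ = ‖Ã‖_F² / σ̃_min²`. -/
theorem rk_arbitrary_reference_point {m n : ℕ}
    (At : Matrix (Fin m) (Fin n) ℝ) (bt : Fin m → ℝ)
    (hAt : At ≠ 0) (hrows : ∀ i, At i ≠ 0)
    (σmin : ℝ) (hσ : IsSmallestNonzeroSingularValue At σmin)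
    (x0 xstar x0r x0n xsr xsn : Fin n → ℝ)
    (hx0r : x0r ∈ rowSpace At) (hx0n : x0n ∈ nullSpace At) (hx0 : x0 = x0r + x0n)
    (hxsr : xsr ∈ rowSpace At) (hxsn : xsn ∈ nullSpace At) (hxs : xstar = xsr + xsn)
    (k : ℕ) :
    rkExp At bt x0 k (fun x => normSq (x - x0n - xsr)) ≤
      (1 - σmin ^ 2 / frobSq At) ^ k * normSq (x0r - xsr)
        + normSq (At.mulVec xstar - bt) / σmin ^ 2 := by
  have hσpos : 0 < σmin := hσ.1
  have hσ2 : 0 < σmin ^ 2 := pow_pos hσpos 2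
  have hFle : σmin ^ 2 ≤ frobSq At := sigma_le_frob At hσ
  have hFpos : 0 < frobSq At := lt_of_lt_of_le hσ2 hFle
  have hFne : frobSq At ≠ 0 := ne_of_gt hFpos
  set F := frobSq At with hFdef
  set q : ℝ := 1 - σmin ^ 2 / F with hqdef
  set r : Fin m → ℝ := At.mulVec xstar - bt with hrdef
  set C : ℝ := normSq r / F with hCdef
  have hq0 : 0 ≤ q := by
    rw [hqdef]
    have : σmin ^ 2 / F ≤ 1 := (div_le_one hFpos).2 hFle
    linarith
  have hC0 : 0 ≤ C := div_nonneg (normSq_nonneg r) (le_of_lt hFpos)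
  -- the invariant predicate
  set P : (Fin n → ℝ) → Prop := fun x => (x - x0n - xsr) ∈ rowSpace At with hPdef
  -- row space is closed under the relevant operations
  have hrsub : ∀ w ∈ rowSpace At, ∀ (t : ℝ) (i : Fin m), w - t • At i ∈ rowSpace At := by
    rintro w ⟨u, rfl⟩ t i
    refine ⟨u - t • (Pi.single i 1 : Fin m → ℝ), ?_⟩
    have hsingle : Atᵀ.mulVec (Pi.single i 1) = At i := by
      funext j
      simp [Matrix.mulVec, dotProduct, Pi.single_apply, Matrix.transpose_apply]
    rw [Matrix.mulVec_sub, Matrix.mulVec_smul, hsingle]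
  have hA0n : At.mulVec x0n = 0 := hx0n
  have hAsn : At.mulVec xsn = 0 := hxsn
  have hAxsr : At.mulVec xsr = At.mulVec xstar := by
    rw [hxs, Matrix.mulVec_add, hAsn, add_zero]
  -- the residual identity
  have hdotx : ∀ (i : Fin m) (x : Fin n → ℝ),
      dot (At i) x - bt i = dot (At i) (x - x0n - xsr) + r i := by
    intro i x
    have h1 : dot (At i) x0n = 0 := by
      have := congrFun hA0n i
      rw [mulVec_apply] at this
      simpa using this
    have h2 : dot (At i) xsr = At.mulVec xstar i := by
      rw [← mulVec_apply, hAxsr]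
    rw [dot_sub_right, dot_sub_right, h1, h2, hrdef]
    simp
  have hstepform : ∀ (i : Fin m) (x : Fin n → ℝ),
      rkStep At bt i x - x0n - xsr
        = (x - x0n - xsr) - ((dot (At i) (x - x0n - xsr) + r i) / normSq (At i)) • At i := by
    intro i x
    rw [rkStep, hdotx]
    abel
  have hP0 : P x0 := by
    show x0 - x0n - xsr ∈ rowSpace At
    obtain ⟨u1, hu1⟩ := hx0r
    obtain ⟨u2, hu2⟩ := hxsr
    refine ⟨u1 - u2, ?_⟩
    rw [Matrix.mulVec_sub, ← hu1, ← hu2, hx0]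
    abel
  have hPstep : ∀ (i : Fin m) (x : Fin n → ℝ), P x → P (rkStep At bt i x) := by
    intro i x hx
    show rkStep At bt i x - x0n - xsr ∈ rowSpace At
    rw [hstepform]
    exact hrsub _ hx _ i
  -- sums of weights
  have hsum1 : ∑ i, normSq (At i) / F = 1 := by
    rw [← Finset.sum_div, ← frobSq_eq, ← hFdef, div_self hFne]
  -- the key one-step estimate
  have key : ∀ x : Fin n → ℝ, P x →
      (∑ i, normSq (At i) / F * normSq (rkStep At bt i x - x0n - xsr))
        ≤ q * normSq (x - x0n - xsr) + C := by
    intro x hx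
    set v : Fin n → ℝ := x - x0n - xsr with hvdef
    have hsb : σmin ^ 2 * normSq v ≤ normSq (At.mulVec v) := spectral_bound At hσ hx
    have hterm : ∀ i, normSq (At i) / F * normSq (rkStep At bt i x - x0n - xsr)
        = normSq (At i) / F * normSq v + (r i ^ 2 - dot (At i) v ^ 2) / F := by
      intro i
      rw [hstepform, ← hvdef, normSq_sub_smul]
      have hna : normSq (At i) ≠ 0 := ne_of_gt (normSq_pos (hrows i))
      field_simp
      ring
    rw [Finset.sum_congr rfl fun i _ => hterm i]
    rw [Finset.sum_add_distrib, ← Finset.sum_mul, hsum1, one_mul, ← Finset.sum_div,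
      Finset.sum_sub_distrib]
    have hr2 : ∑ i, r i ^ 2 = normSq r := rfl
    have hd2 : ∑ i, dot (At i) v ^ 2 = normSq (At.mulVec v) := by
      simp [normSq, mulVec_apply]
    rw [hr2, hd2]
    have hstep1 : (normSq r - normSq (At.mulVec v)) / F
        ≤ (normSq r - σmin ^ 2 * normSq v) / F := by
      apply div_le_div_of_nonneg_right ?_ hFpos.le
      linarith
    calc normSq v + (normSq r - normSq (At.mulVec v)) / F
        ≤ normSq v + (normSq r - σmin ^ 2 * normSq v) / F := by linarith [hstep1]
      _ = q * normSq v + C := by rw [hqdef, hCdef]; field_simp; ring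
  have hsucc : ∀ (K : ℕ) (f : (Fin n → ℝ) → ℝ), rkExp At bt x0 (K + 1) f
      = rkExp At bt x0 K (fun x => ∑ i, normSq (At i) / F * f (rkStep At bt i x)) :=
    fun K f => rfl
  have hmono : ∀ (K : ℕ) (f g : (Fin n → ℝ) → ℝ), (∀ x, P x → f x ≤ g x) →
      rkExp At bt x0 K f ≤ rkExp At bt x0 K g := by
    intro K
    induction K with
    | zero => intro f g h; exact h x0 hP0
    | succ K ih =>
      intro f g h
      rw [hsucc, hsucc]
      apply ih
      intro x hx
      apply Finset.sum_le_sum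
      intro i _
      exact mul_le_mul_of_nonneg_left (h _ (hPstep i x hx))
        (div_nonneg (normSq_nonneg _) hFpos.le)
  have haffine : ∀ (K : ℕ) (a c : ℝ) (f : (Fin n → ℝ) → ℝ),
      rkExp At bt x0 K (fun x => a * f x + c) = a * rkExp At bt x0 K f + c := by
    intro K
    induction K with
    | zero => intro a c f; rfl
    | succ K ih =>
      intro a c f
      rw [hsucc, hsucc]
      have heq : (fun x => ∑ i, normSq (At i) / F * (a * f (rkStep At bt i x) + c))
          = fun x => a * (∑ i, normSq (At i) / F * f (rkStep At bt i x)) + c := by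
        funext x
        have e : ∀ i : Fin m, normSq (At i) / F * (a * f (rkStep At bt i x) + c)
            = a * (normSq (At i) / F * f (rkStep At bt i x)) + normSq (At i) / F * c := by
          intro i; ring
        rw [Finset.sum_congr rfl fun i _ => e i, Finset.sum_add_distrib, ← Finset.mul_sum,
          ← Finset.sum_mul, hsum1, one_mul]
      rw [heq, ih]
  have main : ∀ K : ℕ, rkExp At bt x0 K (fun x => normSq (x - x0n - xsr))
      ≤ q ^ K * normSq (x0r - xsr) + (∑ j ∈ Finset.range K, q ^ j) * C := by
    intro K
    induction K with
    | zero =>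
      have hx00 : x0 - x0n - xsr = x0r - xsr := by rw [hx0]; abel
      show normSq (x0 - x0n - xsr) ≤ _
      rw [hx00]
      simp
    | succ K ih =>
      rw [hsucc]
      calc rkExp At bt x0 K
            (fun x => ∑ i, normSq (At i) / F * normSq (rkStep At bt i x - x0n - xsr))
          ≤ rkExp At bt x0 K (fun x => q * normSq (x - x0n - xsr) + C) := hmono K _ _ key
        _ = q * rkExp At bt x0 K (fun x => normSq (x - x0n - xsr)) + C := haffine K q C _
        _ ≤ q * (q ^ K * normSq (x0r - xsr) + (∑ j ∈ Finset.range K, q ^ j) * C) + C := by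
            have := mul_le_mul_of_nonneg_left ih hq0
            linarith
        _ = q ^ (K + 1) * normSq (x0r - xsr) + (∑ j ∈ Finset.range (K + 1), q ^ j) * C := by
            rw [geom_sum_succ]
            ring
  have hgs : (∑ j ∈ Finset.range k, q ^ j) * C ≤ normSq r / σmin ^ 2 := by
    have hqk : 0 ≤ q ^ k := pow_nonneg hq0 k
    have h1 : (∑ j ∈ Finset.range k, q ^ j) * (q - 1) = q ^ k - 1 := geom_sum_mul q k
    have h2 : (∑ j ∈ Finset.range k, q ^ j) * σmin ^ 2 ≤ F := by
      have hq1 : q - 1 = -(σmin ^ 2 / F) := by rw [hqdef]; ring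
      rw [hq1] at h1
      have h3 : (∑ j ∈ Finset.range k, q ^ j) * (σmin ^ 2 / F) ≤ 1 := by linarith
      have h4 := mul_le_mul_of_nonneg_right h3 hFpos.le
      rw [one_mul] at h4
      have h5 : (∑ j ∈ Finset.range k, q ^ j) * (σmin ^ 2 / F) * F
          = (∑ j ∈ Finset.range k, q ^ j) * σmin ^ 2 := by field_simp
      linarith
    have hnr := normSq_nonneg r
    rw [hCdef, ← mul_div_assoc, div_le_div_iff₀ hFpos hσ2]
    nlinarith
  have := main k
  linarith


end RK
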